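/- For any 1 ≤ q ≤ p and d ∈ (0,1], A_p(n, d) ≤ A_q(n, d^{p/q}). -/

import Mathlib

noncomputable def lpNorm (p : ℝ) {n : ℕ} (x : Fin n → ℝ) : ℝ :=
  (∑ i, |x i| ^ p) ^ (1/p)

noncomputable def lpDist (p : ℝ) {n : ℕ} (u v : Fin n → ℝ) : ℝ :=
  lpNorm p (u - v)

/-- `A_p(n, d)`. -/
noncomputable def lpCodeMax (p : ℝ) (n : ℕ) (d : ℝ) : ℕ :=
  sSup {k : ℕ | ∃ C : Finset (Fin n → ℝ), C.card = k ∧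
    (∀ u ∈ C, lpNorm p u = 1) ∧
    (∀ u ∈ C, ∀ v ∈ C, u ≠ v → 2 * d ≤ lpDist p u v)}

/-- signed power -/
noncomputable def spw (α t : ℝ) : ℝ := if 0 ≤ t then t ^ α else -((-t) ^ α)

lemma abs_spw (α t : ℝ) : |spw α t| = |t| ^ α := by
  unfold spw; split_ifs with h
  · rw [abs_of_nonneg (Real.rpow_nonneg h α), abs_of_nonneg h]
  · push_neg at h
    rw [abs_neg, abs_of_nonneg (Real.rpow_nonneg (by linarith) α), abs_of_neg h]

lemma rpow_superadd {x y p : ℝ} (hx : 0 ≤ x) (hy : 0 ≤ y) (hp : 1 ≤ p) :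
    x ^ p + y ^ p ≤ (x + y) ^ p := by
  have hp0 : 0 < p := lt_of_lt_of_le one_pos hp
  have h := NNReal.rpow_add_rpow_le_add x.toNNReal y.toNNReal hp
  have h2 := NNReal.rpow_le_rpow h hp0.le
  rw [← NNReal.rpow_mul, one_div_mul_cancel hp0.ne', NNReal.rpow_one] at h2
  have := (NNReal.coe_le_coe).2 h2
  push_cast [NNReal.coe_rpow, Real.coe_toNNReal x hx, Real.coe_toNNReal y hy] at this
  linarith

lemma rpow_add_le_two {x y p : ℝ} (hx : 0 ≤ x) (hy : 0 ≤ y) (hp : 1 ≤ p) :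
    (x + y) ^ p ≤ 2 ^ (p - 1) * (x ^ p + y ^ p) := by
  have h := NNReal.rpow_add_le_mul_rpow_add_rpow x.toNNReal y.toNNReal hp
  have := (NNReal.coe_le_coe).2 h
  push_cast [NNReal.coe_rpow, Real.coe_toNNReal x hx, Real.coe_toNNReal y hy] at this
  convert this using 2

lemma spw_key {α : ℝ} (hα : 1 ≤ α) {a b : ℝ} (hab : b ≤ a) :
    2 ^ (1 - α) * (a - b) ^ α ≤ spw α a - spw α b := by
  have hα0 : 0 < α := lt_of_lt_of_le one_pos hα
  have h2 : (2:ℝ) ^ (1 - α) ≤ 1 :=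
    Real.rpow_le_one_of_one_le_of_nonpos one_le_two (by linarith)
  have hab0 : 0 ≤ a - b := sub_nonneg.2 hab
  have habα : 0 ≤ (a - b) ^ α := Real.rpow_nonneg hab0 α
  by_cases hb : 0 ≤ b
  · have ha : 0 ≤ a := le_trans hb hab
    have := rpow_superadd hab0 hb hα
    rw [sub_add_cancel] at this
    have : (a - b) ^ α ≤ a ^ α - b ^ α := by linarith
    simp only [spw, if_pos ha, if_pos hb]
    nlinarith
  · push_neg at hb
    by_cases ha : 0 ≤ a
    · -- b < 0 ≤ a
      have hnb : 0 ≤ -b := by linarith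
      have h3 := rpow_add_le_two ha hnb hα
      simp only [spw, if_pos ha, if_neg (not_le.2 hb), sub_neg_eq_add]
      have h4 : 2 ^ (1 - α) * (a + -b) ^ α ≤ 2 ^ (1 - α) * (2 ^ (α - 1) * (a ^ α + (-b) ^ α)) := by
        apply mul_le_mul_of_nonneg_left _ (Real.rpow_nonneg (by norm_num) _)
        simpa using h3
      have h5 : (2:ℝ) ^ (1 - α) * 2 ^ (α - 1) = 1 := by
        rw [← Real.rpow_add two_pos]; norm_num
      calc 2 ^ (1 - α) * (a - b) ^ α = 2 ^ (1 - α) * (a + -b) ^ α := by ring_nf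
        _ ≤ 2 ^ (1 - α) * (2 ^ (α - 1) * (a ^ α + (-b) ^ α)) := h4
        _ = a ^ α + (-b) ^ α := by rw [← mul_assoc, h5, one_mul]
    · push_neg at ha
      -- b ≤ a < 0
      have hna : 0 ≤ -a := by linarith
      have := rpow_superadd hab0 hna hα
      rw [show a - b + -a = -b by ring] at this
      have h6 : (a - b) ^ α ≤ (-b) ^ α - (-a) ^ α := by linarith
      simp only [spw, if_neg (not_le.2 ha), if_neg (not_le.2 hb)]
      nlinarith

lemma spw_key' {α : ℝ} (hα : 1 ≤ α) (a b : ℝ) :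
    2 ^ (1 - α) * |a - b| ^ α ≤ |spw α a - spw α b| := by
  rcases le_total b a with h | h
  · rw [abs_of_nonneg (sub_nonneg.2 h)]
    exact (spw_key hα h).trans (le_abs_self _)
  · rw [abs_sub_comm a b, abs_sub_comm (spw α a)]
    rw [abs_of_nonneg (sub_nonneg.2 h)]
    exact (spw_key hα h).trans (le_abs_self _)

lemma sum_eq_one_of_lpNorm {p : ℝ} (hp : 0 < p) {n : ℕ} {x : Fin n → ℝ}
    (h : lpNorm p x = 1) : ∑ i, |x i| ^ p = 1 := by
  have hS : 0 ≤ ∑ i, |x i| ^ p :=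
    Finset.sum_nonneg fun i _ => Real.rpow_nonneg (abs_nonneg _) p
  have h2 : ((∑ i, |x i| ^ p) ^ (1/p)) ^ p = ∑ i, |x i| ^ p := by
    rw [← Real.rpow_mul hS, one_div_mul_cancel hp.ne', Real.rpow_one]
  unfold lpNorm at h
  rw [h, Real.one_rpow] at h2
  exact h2.symm

lemma bddAbove_code (q d' : ℝ) (hq : 1 ≤ q) (hd' : 0 < d') (n : ℕ) :
    BddAbove {k : ℕ | ∃ C : Finset (Fin n → ℝ), C.card = k ∧
      (∀ u ∈ C, lpNorm q u = 1) ∧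
      (∀ u ∈ C, ∀ v ∈ C, u ≠ v → 2 * d' ≤ lpDist q u v)} := by
  classical
  have hq0 : 0 < q := lt_of_lt_of_le one_pos hq
  set ε : ℝ := 2 * d' with hε
  have hε0 : 0 < ε := by positivity
  set δ : ℝ := ε / (2 * (n + 1)) with hδ
  have hδ0 : 0 < δ := by positivity
  refine ⟨(Fintype.piFinset fun _ : Fin n =>
      Finset.Icc (⌊-(1/δ)⌋ : ℤ) ⌊1/δ⌋).card, ?_⟩
  rintro k ⟨C, rfl, hnorm, hdist⟩
  set g : (Fin n → ℝ) → (Fin n → ℤ) := fun x i => ⌊x i / δ⌋ with hg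
  -- coordinates bounded by 1
  have habs : ∀ x ∈ C, ∀ i, |x i| ≤ 1 := by
    intro x hx i
    have hs := sum_eq_one_of_lpNorm hq0 (hnorm x hx)
    have h1 : |x i| ^ q ≤ 1 := by
      rw [← hs]
      exact Finset.single_le_sum (fun j _ => Real.rpow_nonneg (abs_nonneg _) q)
        (Finset.mem_univ i)
    by_contra hgt
    push_neg at hgt
    have : (1:ℝ) < |x i| ^ q := Real.one_lt_rpow_iff_of_pos (by linarith) |>.2 (Or.inl ⟨hgt, hq0⟩)
    linarith
  -- injectivity
  have hinj : Set.InjOn g C := by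
    intro u hu v hv huv
    by_contra hne
    have hsum : ∀ i, |u i - v i| ≤ δ := by
      intro i
      have hfl : ⌊u i / δ⌋ = ⌊v i / δ⌋ := congrFun huv i
      have h1 : |u i / δ - v i / δ| < 1 := Int.abs_sub_lt_one_of_floor_eq_floor hfl
      rw [div_sub_div_same, abs_div, abs_of_pos hδ0, div_lt_one hδ0] at h1
      exact h1.le
    have hle : ∑ i, |(u - v) i| ^ q ≤ n * δ ^ q := by
      calc ∑ i, |(u - v) i| ^ q ≤ ∑ _i : Fin n, δ ^ q := by
            apply Finset.sum_le_sum
            intro i _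
            exact Real.rpow_le_rpow (abs_nonneg _) (by simpa using hsum i) hq0.le
        _ = n * δ ^ q := by simp [mul_comm]
    have hdle : lpDist q u v ≤ (n : ℝ) ^ (1/q) * δ := by
      unfold lpDist lpNorm
      have h2 : ((n : ℝ) * δ ^ q) ^ (1/q) = (n : ℝ) ^ (1/q) * δ := by
        rw [Real.mul_rpow (Nat.cast_nonneg n) (Real.rpow_nonneg hδ0.le q),
          ← Real.rpow_mul hδ0.le, mul_one_div, div_self hq0.ne', Real.rpow_one]
      rw [← h2]
      exact Real.rpow_le_rpow
        (Finset.sum_nonneg fun i _ => Real.rpow_nonneg (abs_nonneg _) q) hle (by positivity)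
    have hn1 : (n : ℝ) ^ (1/q) ≤ (n : ℝ) + 1 := by
      rcases Nat.eq_zero_or_pos n with h0 | h1
      · subst h0; rw [Nat.cast_zero, Real.zero_rpow (by positivity)]; norm_num
      · have : (n : ℝ) ^ (1/q) ≤ (n : ℝ) ^ (1:ℝ) := by
          apply Real.rpow_le_rpow_of_exponent_le (by exact_mod_cast h1)
          rw [div_le_one hq0]; exact hq
        rw [Real.rpow_one] at this; linarith
    have hcontr : lpDist q u v < ε := by
      have h3 : ((n : ℝ) + 1) * δ = ε / 2 := by
        field_simp [hδ]
        rw [hδ]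
        have hn : (2 * ((n:ℝ) + 1)) ≠ 0 := by positivity
        calc ((n:ℝ) + 1) * (ε / (2 * (n + 1))) * 2
            = ε * (2 * (n + 1)) / (2 * (n + 1)) := by ring
          _ = ε := mul_div_cancel_right₀ ε hn
      have h4 : (n : ℝ) ^ (1/q) * δ ≤ ((n : ℝ) + 1) * δ :=
        mul_le_mul_of_nonneg_right hn1 hδ0.le
      calc lpDist q u v ≤ (n : ℝ) ^ (1/q) * δ := hdle
        _ ≤ ε / 2 := by rw [← h3]; exact h4
        _ < ε := by linarith
    exact absurd (hdist u hu v hv hne) (not_le.2 hcontr)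
  -- image bound
  have himg : C.image g ⊆ Fintype.piFinset fun _ : Fin n =>
      Finset.Icc (⌊-(1/δ)⌋ : ℤ) ⌊1/δ⌋ := by
    intro y hy
    rw [Finset.mem_image] at hy
    obtain ⟨x, hx, rfl⟩ := hy
    rw [Fintype.mem_piFinset]
    intro i
    rw [Finset.mem_Icc]
    have h1 := habs x hx i
    have h2 : -(1/δ) ≤ x i / δ := by
      have := div_le_div_of_nonneg_right (c := δ) (show (-1:ℝ) ≤ x i from (abs_le.1 h1).1) hδ0.le
      simpa [neg_div] using this
    have h3 : x i / δ ≤ 1/δ :=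
      div_le_div_of_nonneg_right (abs_le.1 h1).2 hδ0.le
    exact ⟨Int.floor_le_floor h2, Int.floor_le_floor h3⟩
  calc C.card = (C.image g).card := (Finset.card_image_of_injOn hinj).symm
    _ ≤ _ := Finset.card_le_card himg

theorem stmt12 (p q d : ℝ) (hq : 1 ≤ q) (hpq : q ≤ p) (hd0 : 0 < d) (hd1 : d ≤ 1)
    (n : ℕ) : lpCodeMax p n d ≤ lpCodeMax q n (d ^ (p / q)) := by
  classical
  have hq0 : 0 < q := lt_of_lt_of_le one_pos hq
  have hp1 : 1 ≤ p := le_trans hq hpq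
  have hp0 : 0 < p := lt_of_lt_of_le one_pos hp1
  set α : ℝ := p / q with hα
  have hα1 : 1 ≤ α := (one_le_div hq0).2 hpq
  have hαq : α * q = p := div_mul_cancel₀ p hq0.ne'
  have hdpq : 0 < d ^ α := Real.rpow_pos_of_pos hd0 α
  set f : (Fin n → ℝ) → (Fin n → ℝ) := fun x i => spw α (x i) with hf
  -- norm preservation
  have hnormf : ∀ x : Fin n → ℝ, lpNorm p x = 1 → lpNorm q (f x) = 1 := by
    intro x hx
    have hs := sum_eq_one_of_lpNorm hp0 hx
    unfold lpNorm
    have he : ∀ i, |f x i| ^ q = |x i| ^ p := by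
      intro i
      show |spw α (x i)| ^ q = _
      rw [abs_spw, ← Real.rpow_mul (abs_nonneg _), hαq]
    rw [Finset.sum_congr rfl fun i _ => he i, hs, Real.one_rpow]
  -- distance bound
  have hdistf : ∀ u v : Fin n → ℝ, 2 * d ≤ lpDist p u v →
      2 * d ^ α ≤ lpDist q (f u) (f v) := by
    intro u v huv
    have hsp : (2 * d) ^ p ≤ ∑ i, |(u - v) i| ^ p := by
      have h1 := Real.rpow_le_rpow (by positivity) huv hp0.le
      unfold lpDist lpNorm at h1
      rwa [← Real.rpow_mul (Finset.sum_nonneg fun i _ => Real.rpow_nonneg (abs_nonneg _) p),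
        one_div_mul_cancel hp0.ne', Real.rpow_one] at h1
    have hkey : ∀ i, 2 ^ (q - p) * |(u - v) i| ^ p ≤ |(f u - f v) i| ^ q := by
      intro i
      have h2 := spw_key' hα1 (u i) (v i)
      have h3 := Real.rpow_le_rpow (by positivity) h2 hq0.le
      have h4 : ((2:ℝ) ^ (1 - α) * |u i - v i| ^ α) ^ q
          = 2 ^ (q - p) * |(u - v) i| ^ p := by
        rw [Real.mul_rpow (Real.rpow_nonneg (by norm_num) _)
            (Real.rpow_nonneg (abs_nonneg _) _),
          ← Real.rpow_mul (by norm_num : (0:ℝ) ≤ 2),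
          ← Real.rpow_mul (abs_nonneg _), hαq]
        have h44 : (1 - α) * q = q - p := by rw [sub_mul, one_mul, hαq]
        rw [h44]
        rfl
      rw [h4] at h3
      have h5 : (f u - f v) i = spw α (u i) - spw α (v i) := rfl
      rw [h5]
      exact h3
    have hsum : 2 ^ q * d ^ p ≤ ∑ i, |(f u - f v) i| ^ q := by
      have h6 : ∑ i, 2 ^ (q - p) * |(u - v) i| ^ p ≤ ∑ i, |(f u - f v) i| ^ q :=
        Finset.sum_le_sum fun i _ => hkey i
      rw [← Finset.mul_sum] at h6
      have h7 : (2:ℝ) ^ q * d ^ p ≤ 2 ^ (q - p) * ∑ i, |(u - v) i| ^ p := by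
        have h8 : (2:ℝ) ^ (q - p) * (2 * d) ^ p ≤ 2 ^ (q - p) * ∑ i, |(u - v) i| ^ p :=
          mul_le_mul_of_nonneg_left hsp (Real.rpow_nonneg (by norm_num) _)
        have h9 : (2:ℝ) ^ (q - p) * (2 * d) ^ p = 2 ^ q * d ^ p := by
          rw [Real.mul_rpow (by norm_num : (0:ℝ) ≤ 2) hd0.le, ← mul_assoc,
            ← Real.rpow_add two_pos]
          norm_num
        linarith
      linarith
    have h10 := Real.rpow_le_rpow (by positivity) hsum (by positivity : (0:ℝ) ≤ 1/q)
    have h11 : ((2:ℝ) ^ q * d ^ p) ^ (1/q) = 2 * d ^ α := by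
      rw [Real.mul_rpow (Real.rpow_nonneg (by norm_num) _) (Real.rpow_nonneg hd0.le _),
        ← Real.rpow_mul (by norm_num : (0:ℝ) ≤ 2), ← Real.rpow_mul hd0.le,
        mul_one_div, mul_one_div, div_self hq0.ne', Real.rpow_one, hα]
    rw [h11] at h10
    unfold lpDist lpNorm
    exact h10
  -- sSup comparison
  unfold lpCodeMax
  apply csSup_le_csSup (bddAbove_code q (d ^ (p/q)) hq hdpq n)
  · exact ⟨0, ∅, by simp, by simp, by simp⟩
  · rintro k ⟨C, rfl, hnorm, hdist⟩
    refine ⟨C.image f, ?_, ?_, ?_⟩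
    · apply Finset.card_image_of_injOn
      intro u hu v hv huv
      by_contra hne
      have h1 := hdistf u v (hdist u hu v hv hne)
      have h2 : lpDist q (f u) (f v) = 0 := by
        unfold lpDist lpNorm
        rw [huv]
        simp [Real.zero_rpow hq0.ne', Real.zero_rpow (inv_ne_zero hq0.ne')]
      rw [h2] at h1
      nlinarith
    · rintro u hu
      rw [Finset.mem_image] at hu
      obtain ⟨x, hx, rfl⟩ := hu
      exact hnormf x (hnorm x hx)
    · rintro u hu v hv huv
      rw [Finset.mem_image] at hu hv
      obtain ⟨x, hx, rfl⟩ := hu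
      obtain ⟨y, hy, rfl⟩ := hv
      have hxy : x ≠ y := fun h => huv (by rw [h])
      exact hdistf x y (hdist x hx y hy hxy)
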